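/- Let p be a prime, G a t.d.l.c. group, H a closed subgroup of G (with the subspace topology), and M ≥ 0. If G admits a left-invariant normed ℚ_p-mean of operator norm ≤ M, then H admits a left-invariant normed ℚ_p-mean of operator norm ≤ M; hence ‖H‖_p ≤ ‖G‖_p. -/

import Mathlib

open BoundedContinuousFunction

/-- The left translate of a bounded continuous function: `(leftTranslate 𝕂 g f) x = f (g⁻¹ * x)`. -/
noncomputable def leftTranslate {G : Type*} [Group G] [TopologicalSpace G] [IsTopologicalGroup G]
    (𝕂 : Type*) [NormedField 𝕂] (g : G) (f : G →ᵇ 𝕂) : G →ᵇ 𝕂 :=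
  f.compContinuous ⟨fun x => g⁻¹ * x, continuous_mul_left g⁻¹⟩

/-- `m` is a left-invariant normed `𝕂`-mean on `G`: a bounded (equivalently, continuous)
linear functional on the space of bounded continuous `𝕂`-valued functions on `G`, sending the
constant function `𝟙_G` to `1`, and invariant under left translation. -/
def IsInvariantMean (𝕂 : Type*) [NormedField 𝕂] (G : Type*) [Group G] [TopologicalSpace G]
    [IsTopologicalGroup G] (m : (G →ᵇ 𝕂) →ₗ[𝕂] 𝕂) : Prop :=
  (∃ C : ℝ, ∀ f : G →ᵇ 𝕂, ‖m f‖ ≤ C * ‖f‖) ∧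
    m (BoundedContinuousFunction.const G (1 : 𝕂)) = 1 ∧
    ∀ (g : G) (f : G →ᵇ 𝕂), m (leftTranslate 𝕂 g f) = m f

/-- The operator norm of the linear functional `m` is at most `C`. -/
def MeanNormLE (𝕂 : Type*) [NormedField 𝕂] (G : Type*) [Group G] [TopologicalSpace G]
    [IsTopologicalGroup G] (m : (G →ᵇ 𝕂) →ₗ[𝕂] 𝕂) (C : ℝ) : Prop :=
  ∀ f : G →ᵇ 𝕂, ‖m f‖ ≤ C * ‖f‖

section VanDantzig

open Set Filter Topology
open scoped Pointwise

variable {G : Type*} [Group G] [TopologicalSpace G] [IsTopologicalGroup G]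

private lemma exist_mul_closure_nhd' {W : Set G} (hWc : IsCompact W) (WClopen : IsClopen W) :
    ∃ T ∈ 𝓝 (1 : G), W * T ⊆ W := by
  apply hWc.induction_on (p := fun S ↦ ∃ T ∈ 𝓝 (1 : G), S * T ⊆ W)
    ⟨Set.univ, by simp only [univ_mem, Set.empty_mul, Set.empty_subset, and_self]⟩
    (fun _ _ huv ⟨T, hT, mem⟩ ↦ ⟨T, hT, (Set.mul_subset_mul_right huv).trans mem⟩)
    (fun U V ⟨T₁, hT₁, mem1⟩ ⟨T₂, hT₂, mem2⟩ ↦ ⟨T₁ ∩ T₂, inter_mem hT₁ hT₂, by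
      rw [Set.union_mul]
      exact Set.union_subset ((Set.mul_subset_mul_left Set.inter_subset_left).trans mem1)
        ((Set.mul_subset_mul_left Set.inter_subset_right).trans mem2)⟩)
  intro x memW
  have : (x, 1) ∈ (fun p : G × G ↦ p.1 * p.2) ⁻¹' W := by simp [memW]
  rcases isOpen_prod_iff.mp (continuous_mul.isOpen_preimage W <| WClopen.2) x 1 this with
    ⟨U, V, Uopen, Vopen, xmemU, onememV, prodsub⟩
  have h6 : U * V ⊆ W := Set.mul_subset_iff.mpr (fun _ hx _ hy ↦ prodsub (Set.mk_mem_prod hx hy))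
  exact ⟨U ∩ W, ⟨U, Uopen.mem_nhds xmemU, W, fun _ a ↦ a, rfl⟩,
    V, IsOpen.mem_nhds Vopen onememV, fun _ a ↦ h6 ((Set.mul_subset_mul_right Set.inter_subset_left) a)⟩

private lemma exists_openSubgroup_sub_compact_clopen {W : Set G} (hWc : IsCompact W)
    (WClopen : IsClopen W) (einW : (1 : G) ∈ W) :
    ∃ S : Subgroup G, IsOpen (S : Set G) ∧ (S : Set G) ⊆ W := by
  rcases exist_mul_closure_nhd' hWc WClopen with ⟨S₀, Smemnhds, mulclose⟩
  rcases mem_nhds_iff.mp Smemnhds with ⟨U, UsubS, Uopen, onememU⟩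
  set V : Set G := U ∩ U⁻¹ with hV
  have hVnhd : V ∈ 𝓝 (1 : G) := by
    refine inter_mem (Uopen.mem_nhds onememU) ?_
    simpa using inv_mem_nhds_one G (Uopen.mem_nhds onememU)
  have hVinv : V⁻¹ = V := by simp [hV, Set.inter_comm]
  have hVopen : IsOpen V := Uopen.inter Uopen.inv
  have hVmul : W * V ⊆ W := fun a ha ↦
    mulclose (Set.mul_subset_mul_left (UsubS.trans' Set.inter_subset_left) ha)
  let S : Subgroup G := {
    carrier := ⋃ n, V ^ (n + 1)
    mul_mem' := fun ha hb ↦ by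
      rcases Set.mem_iUnion.mp ha with ⟨k, hk⟩
      rcases Set.mem_iUnion.mp hb with ⟨l, hl⟩
      apply Set.mem_iUnion.mpr
      use k + 1 + l
      rw [add_assoc, pow_add]
      exact Set.mul_mem_mul hk hl
    one_mem' := by
      apply Set.mem_iUnion.mpr
      use 0
      simp [mem_of_mem_nhds hVnhd]
    inv_mem' := fun ha ↦ by
      rcases Set.mem_iUnion.mp ha with ⟨k, hk⟩
      apply Set.mem_iUnion.mpr
      use k
      rw [← hVinv]
      simpa only [inv_pow, Set.mem_inv, inv_inv] using hk }
  have hSopen : IsOpen (⋃ n, V ^ (n + 1)) := by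
    refine isOpen_iUnion (fun n ↦ ?_)
    rw [pow_succ]
    exact hVopen.mul_left
  refine ⟨S, hSopen, ?_⟩
  have mulVpow (n : ℕ) : W * V ^ (n + 1) ⊆ W := by
    induction' n with n ih
    · simpa using hVmul
    · rw [pow_succ, ← mul_assoc]
      exact (Set.mul_subset_mul_right ih).trans hVmul
  intro x hx
  rcases Set.mem_iUnion.mp hx with ⟨k, hk⟩
  have : V ^ (k + 1) ⊆ W * V ^ (k + 1) := fun y hy ↦ ⟨1, einW, y, hy, one_mul y⟩
  exact mulVpow k (this hk)

private lemma exists_compact_open_subgroup' [LocallyCompactSpace G]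
    [TotallyDisconnectedSpace G] [T2Space G] :
    ∃ U : Subgroup G, IsCompact (U : Set G) ∧ IsOpen (U : Set G) := by
  obtain ⟨L, hLc, hL1⟩ := exists_compact_mem_nhds (1 : G)
  obtain ⟨W, hWclopen, h1W, hWL⟩ :=
    (loc_compact_Haus_tot_disc_of_zero_dim).mem_nhds_iff.mp hL1
  have hWc : IsCompact W := hLc.of_isClosed_subset hWclopen.isClosed hWL
  obtain ⟨S, hSopen, hSW⟩ := exists_openSubgroup_sub_compact_clopen hWc hWclopen h1W
  exact ⟨S, hWc.of_isClosed_subset (S.isClosed_of_isOpen hSopen) hSW, hSopen⟩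

end VanDantzig
section CompactTransversal

open Set Filter Topology
open scoped Pointwise

variable {U : Type*} [Group U] [TopologicalSpace U] [IsTopologicalGroup U]
    [CompactSpace U] [TotallyDisconnectedSpace U] [T2Space U]

private lemma exists_openNormal_subset {W : Set U} (hWo : IsOpen W) (h1 : (1 : U) ∈ W) :
    ∃ N : Subgroup U, N.Normal ∧ IsOpen (N : Set U) ∧ (N : Set U) ⊆ W := by
  obtain ⟨V, hVclopen, h1V, hVW⟩ := compact_exists_isClopen_in_isOpen hWo h1
  obtain ⟨N, hN⟩ :=
    IsTopologicalGroup.exist_openNormalSubgroup_sub_clopen_nhds_of_one hVclopen h1V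
  exact ⟨N.toSubgroup, N.isNormal', N.toOpenSubgroup.isOpen', fun x hx => hVW (hN hx)⟩

/-- The conditions of the Zorn poset: `p.1` is a closed subgroup of `K`, `p.2` is a closed
set stable under right multiplication by `p.1`, meeting every right coset of `K`, and
any two of its elements in the same `K`-coset lie in the same `p.1`-coset. -/
private def TransData (K : Subgroup U) (p : Subgroup U × Set U) : Prop :=
  IsClosed (p.1 : Set U) ∧ p.1 ≤ K ∧ IsClosed p.2 ∧
    (∀ c ∈ p.2, ∀ s ∈ p.1, c * s ∈ p.2) ∧
    (∀ x : U, ∃ c ∈ p.2, x⁻¹ * c ∈ K) ∧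
    (∀ c ∈ p.2, ∀ c' ∈ p.2, c⁻¹ * c' ∈ K → c⁻¹ * c' ∈ p.1)

private theorem exists_closed_transversal (K : Subgroup U) (hK : IsClosed (K : Set U)) :
    ∃ C : Set U, IsClosed C ∧ ∀ x : U, ∃! c, c ∈ C ∧ x⁻¹ * c ∈ K := by
  classical
  -- the relation: `b` refines `a`
  let r : {p : Subgroup U × Set U // TransData K p} → {p // TransData K p} → Prop :=
    fun a b => b.1.1 ≤ a.1.1 ∧ b.1.2 ⊆ a.1.2
  have hbase : TransData K (K, (univ : Set U)) :=
    ⟨hK, le_rfl, isClosed_univ, fun _ _ _ _ => mem_univ _,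
      fun x => ⟨x, mem_univ _, by simpa using K.one_mem⟩, fun c _ c' _ h => h⟩
  obtain ⟨m, hm⟩ : ∃ m, ∀ a, r m a → r a m := by
    apply exists_maximal_of_chains_bounded (r := r)
    · intro c hc
      rcases c.eq_empty_or_nonempty with rfl | hne
      · exact ⟨⟨(K, univ), hbase⟩, fun a ha => absurd ha (notMem_empty a)⟩
      haveI : Nonempty c := hne.to_subtype
      set S : Subgroup U := ⨅ a : c, (a : {p // TransData K p}).1.1 with hS
      set Cs : Set U := ⋂ a : c, (a : {p // TransData K p}).1.2 with hCs
      have hSclosed : IsClosed (S : Set U) := by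
        rw [hS, Subgroup.coe_iInf]
        exact isClosed_iInter fun a => (a : {p // TransData K p}).2.1
      have hCsclosed : IsClosed Cs := isClosed_iInter fun a => a.1.2.2.2.1
      have hcomp : ∀ a b : c, r (a : {p // TransData K p}) b ∨ r (b : {p // TransData K p}) a := by
        intro a b
        rcases eq_or_ne (a : {p // TransData K p}) b with h | h
        · exact Or.inl (h ▸ ⟨le_rfl, subset_rfl⟩)
        · exact hc a.2 b.2 h
      have hcov : ∀ x : U, ∃ y ∈ Cs, x⁻¹ * y ∈ K := by
        intro x
        set F : c → Set U := fun a => (a : {p // TransData K p}).1.2 ∩ {y | x⁻¹ * y ∈ K}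
          with hF
        have hFc : ∀ a, IsCompact (F a) := fun a =>
          ((a.1.2.2.2.1.inter (hK.preimage (continuous_mul_left x⁻¹)))).isCompact
        have hFcl : ∀ a, IsClosed (F a) := fun a =>
          a.1.2.2.2.1.inter (hK.preimage (continuous_mul_left x⁻¹))
        have hFne : ∀ a, (F a).Nonempty := by
          intro a
          obtain ⟨y, hy1, hy2⟩ := a.1.2.2.2.2.2.1 x
          exact ⟨y, hy1, hy2⟩
        have hdir : Directed (· ⊇ ·) F := by
          intro a b
          rcases hcomp a b with h | h
          · exact ⟨b, fun z hz => ⟨h.2 hz.1, hz.2⟩, fun z hz => hz⟩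
          · exact ⟨a, fun z hz => hz, fun z hz => ⟨h.2 hz.1, hz.2⟩⟩
        obtain ⟨y, hy⟩ :=
          IsCompact.nonempty_iInter_of_directed_nonempty_isCompact_isClosed F hdir hFne hFc hFcl
        rw [mem_iInter] at hy
        exact ⟨y, mem_iInter.mpr fun a => (hy a).1, (hy (Classical.arbitrary c)).2⟩
      refine ⟨⟨(S, Cs), ?_, ?_, hCsclosed, ?_, hcov, ?_⟩, ?_⟩
      · exact hSclosed
      · exact le_trans (iInf_le _ (Classical.arbitrary c)) (Classical.arbitrary c : c).1.2.2.1
      · intro cc hcc s hs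
        refine mem_iInter.mpr fun a => ?_
        exact a.1.2.2.2.2.1 cc (mem_iInter.mp hcc a) s (Subgroup.mem_iInf.mp hs a)
      · intro c₁ hc₁ c₂ hc₂ hK'
        refine Subgroup.mem_iInf.mpr fun a => ?_
        exact a.1.2.2.2.2.2.2 c₁ (mem_iInter.mp hc₁ a) c₂ (mem_iInter.mp hc₂ a) hK'
      · intro a ha
        exact ⟨iInf_le _ (⟨a, ha⟩ : c), iInter_subset _ (⟨a, ha⟩ : c)⟩
    · intro a b c hab hbc
      exact ⟨le_trans hbc.1 hab.1, hbc.2.trans hab.2⟩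
  clear hbase
  rcases m with ⟨⟨S, C⟩, hP⟩
  obtain ⟨hSc, hSK, hCc, hstab, hcov, hinj⟩ := hP
  have hSbot : S = ⊥ := by
    by_contra hne
    obtain ⟨g, hgS, hg1⟩ := S.bot_or_exists_ne_one.resolve_left hne
    obtain ⟨N, hNnorm, hNopen, hNsub⟩ :=
      exists_openNormal_subset (isOpen_compl_singleton (x := g))
        (Set.mem_compl_singleton_iff.mpr (Ne.symm hg1))
    have hgN : g ∉ N := fun hgN => (hNsub hgN) rfl
    have hNc : IsClosed (N : Set U) := N.isClosed_of_isOpen hNopen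
    have hconj : ∀ (a : U) {n : U}, n ∈ N → a⁻¹ * n * a ∈ N := fun a {n} hn => by
      simpa using hNnorm.conj_mem _ hn a⁻¹
    set S' : Subgroup U := S ⊓ N with hS'
    have hS'S : S' ≤ S := inf_le_left
    have hS'N : S' ≤ N := inf_le_right
    have hS'c : IsClosed (S' : Set U) := by
      rw [hS', Subgroup.coe_inf]
      exact hSc.inter hNc
    let dc : Setoid U :=
      ⟨fun a b => ∃ n ∈ N, ∃ t ∈ S, b = n * a * t,
        ⟨fun a => ⟨1, N.one_mem, 1, S.one_mem, by group⟩,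
         fun {a b} h => by
           obtain ⟨n, hn, t, ht, hb⟩ := h
           exact ⟨n⁻¹, N.inv_mem hn, t⁻¹, S.inv_mem ht, by rw [hb]; group⟩,
         fun {a b c} h h' => by
           obtain ⟨n, hn, t, ht, hb⟩ := h
           obtain ⟨n', hn', t', ht', hc⟩ := h'
           exact ⟨n' * n, N.mul_mem hn' hn, t * t', S.mul_mem ht ht', by
             rw [hc, hb]; group⟩⟩⟩
    set rep : U → U := fun x => (Quotient.mk dc x).out with hrepdef
    have hrep : ∀ x : U, ∃ n ∈ N, ∃ t ∈ S, x = n * rep x * t := fun x =>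
      Quotient.mk_out (s := dc) x
    have hrepc : ∀ {x y : U}, (∃ n ∈ N, ∃ t ∈ S, y = n * x * t) → rep x = rep y :=
      fun {x y} h => congrArg Quotient.out (Quot.sound h)
    set C' : Set U := {z | z ∈ C ∧ ∃ n ∈ N, ∃ t ∈ (S' : Set U), z = n * rep z * t} with hC'
    -- key step: if `y ∈ C` and some element of `C'` lies in `N * (y * S')` then `y ∈ C'`
    have hkey : ∀ y z : U, y ∈ C → z ∈ C' → (∃ n ∈ N, ∃ t ∈ (S' : Set U), z = n * (y * t)) →
        y ∈ C' := by
      intro y z hyC hzC' hzy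
      obtain ⟨n0, hn0, t0, ht0, hy0⟩ := hrep y
      obtain ⟨hzC, n2, hn2, t2, ht2, hz2⟩ := hzC'
      obtain ⟨n1, hn1, t1, ht1, hz1⟩ := hzy
      have hyz : rep y = rep z :=
        hrepc ⟨n1, hn1, t1, hS'S ht1, by rw [hz1]; group⟩
      rw [← hyz] at hz2
      set r0 := rep y with hr0
      have e : n2 * r0 * t2 = n1 * (y * t1) := by rw [← hz2, hz1]
      have hn2eq : n2 = n1 * (y * t1) * t2⁻¹ * r0⁻¹ := by rw [← e]; group
      have hw : r0⁻¹ * (n0⁻¹ * (n1⁻¹ * n2)) * r0 = t0 * t1 * t2⁻¹ := by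
        rw [hn2eq, hy0]; group
      have hwN : r0⁻¹ * (n0⁻¹ * (n1⁻¹ * n2)) * r0 ∈ N :=
        hconj r0 (N.mul_mem (N.inv_mem hn0) (N.mul_mem (N.inv_mem hn1) hn2))
      have hwS : r0⁻¹ * (n0⁻¹ * (n1⁻¹ * n2)) * r0 ∈ S := by
        rw [hw]
        exact S.mul_mem (S.mul_mem ht0 (hS'S ht1)) (S.inv_mem (hS'S ht2))
      have hwS' : r0⁻¹ * (n0⁻¹ * (n1⁻¹ * n2)) * r0 ∈ S' := ⟨hwS, hwN⟩
      have ht0' : t0 ∈ S' := by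
        have h5 : t0 = (r0⁻¹ * (n0⁻¹ * (n1⁻¹ * n2)) * r0) * t2 * t1⁻¹ := by
          rw [hw]; group
        rw [h5]
        exact S'.mul_mem (S'.mul_mem hwS' ht2) (S'.inv_mem ht1)
      exact ⟨hyC, n0, hn0, t0, ht0', hy0⟩
    have hC'c : IsClosed C' := by
      rw [← isOpen_compl_iff, isOpen_iff_forall_mem_open]
      intro y hy
      by_cases hyC : y ∈ C
      · refine ⟨{z | ∃ n ∈ N, ∃ t ∈ (S' : Set U), z = n * (y * t)},
          fun z hz hzC' => hy (hkey y z hyC hzC' hz), ?_, ?_⟩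
        · have hrw : {z | ∃ n ∈ N, ∃ t ∈ (S' : Set U), z = n * (y * t)} =
              ⋃ t ∈ (S' : Set U), (fun n => n * (y * t)) '' (N : Set U) := by
            ext z
            simp only [Set.mem_iUnion, Set.mem_image, Set.mem_setOf_eq]
            constructor
            · rintro ⟨n, hn, t, ht, rfl⟩
              exact ⟨t, ht, n, hn, rfl⟩
            · rintro ⟨t, ht, n, hn, rfl⟩
              exact ⟨n, hn, t, ht, rfl⟩
          rw [hrw]
          exact isOpen_biUnion fun t _ => (isOpenMap_mul_right (y * t)) _ hNopen
        · exact ⟨1, N.one_mem, 1, S'.one_mem, by group⟩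
      · exact ⟨Cᶜ, fun z hz hzC' => hz hzC'.1, hCc.isOpen_compl, hyC⟩
    have hnew : TransData K (S', C') := by
      refine ⟨hS'c, hS'S.trans hSK, hC'c, ?_, ?_, ?_⟩
      · rintro c ⟨hcC, n, hn, t, ht, hc⟩ s hs
        refine ⟨hstab c hcC s (hS'S hs), n, hn, t * s, S'.mul_mem ht hs, ?_⟩
        have : rep (c * s) = rep c := (hrepc ⟨1, N.one_mem, s, hS'S hs, by group⟩).symm
        rw [this]
        conv_lhs => rw [hc]
        group
      · intro x
        obtain ⟨c, hcC, hcK⟩ := hcov x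
        obtain ⟨n, hn, t, ht, hc⟩ := hrep c
        refine ⟨c * t⁻¹, ⟨hstab c hcC t⁻¹ (S.inv_mem ht), n, hn, 1, S'.one_mem, ?_⟩, ?_⟩
        · have : rep (c * t⁻¹) = rep c :=
            (hrepc ⟨1, N.one_mem, t⁻¹, S.inv_mem ht, by group⟩).symm
          rw [this]
          conv_lhs => rw [hc]
          group
        · have h6 : x⁻¹ * (c * t⁻¹) = (x⁻¹ * c) * t⁻¹ := by group
          rw [h6]
          exact K.mul_mem hcK (K.inv_mem (hSK ht))
      · rintro c₁ ⟨hc₁C, n₁, hn₁, t₁, ht₁, hc₁⟩ c₂ ⟨hc₂C, n₂, hn₂, t₂, ht₂, hc₂⟩ h12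
        have hw0 : c₁⁻¹ * c₂ ∈ S := hinj c₁ hc₁C c₂ hc₂C h12
        have h12' : rep c₁ = rep c₂ := hrepc ⟨1, N.one_mem, c₁⁻¹ * c₂, hw0, by group⟩
        rw [← h12'] at hc₂
        set r0 := rep c₁ with hr0
        have hv : r0⁻¹ * (n₁⁻¹ * n₂) * r0 = t₁ * (c₁⁻¹ * c₂) * t₂⁻¹ := by
          conv_rhs => rw [hc₁, hc₂]
          group
        have hvN : r0⁻¹ * (n₁⁻¹ * n₂) * r0 ∈ N :=
          hconj r0 (N.mul_mem (N.inv_mem hn₁) hn₂)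
        have hvS : r0⁻¹ * (n₁⁻¹ * n₂) * r0 ∈ S := by
          rw [hv]
          exact S.mul_mem (S.mul_mem (hS'S ht₁) hw0) (S.inv_mem (hS'S ht₂))
        have hfin : c₁⁻¹ * c₂ = t₁⁻¹ * (r0⁻¹ * (n₁⁻¹ * n₂) * r0) * t₂ := by
          rw [hv]; group
        rw [hfin]
        exact S'.mul_mem (S'.mul_mem (S'.inv_mem ht₁) ⟨hvS, hvN⟩) ht₂
    have hback := hm ⟨(S', C'), hnew⟩ ⟨hS'S, fun z hz => hz.1⟩
    exact hgN (hS'N (hback.1 hgS))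
  refine ⟨C, hCc, fun x => ?_⟩
  obtain ⟨c, hcC, hcK⟩ := hcov x
  refine ⟨c, ⟨hcC, hcK⟩, fun c' hc' => ?_⟩
  have h7 : (x⁻¹ * c')⁻¹ * (x⁻¹ * c) = c'⁻¹ * c := by group
  have h8 : c'⁻¹ * c ∈ S := by
    refine hinj c' hc'.1 c hcC ?_
    rw [← h7]
    exact K.mul_mem (K.inv_mem hc'.2) hcK
  rw [hSbot, Subgroup.mem_bot] at h8
  exact inv_mul_eq_one.mp h8


end CompactTransversal
section EquivProj

open Set Topology
open scoped Pointwise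

variable {U : Type*} [Group U] [TopologicalSpace U] [IsTopologicalGroup U]
    [CompactSpace U] [TotallyDisconnectedSpace U] [T2Space U]

private theorem exists_equivariant_proj (K : Subgroup U) (hK : IsClosed (K : Set U)) :
    ∃ ρ : U → U, Continuous ρ ∧ (∀ x, ρ x ∈ K) ∧
      ∀ (x k : U), k ∈ K → ρ (x * k) = ρ x * k := by
  obtain ⟨C, hCc, htrans⟩ := exists_closed_transversal K hK
  haveI : CompactSpace C := isCompact_iff_compactSpace.mp hCc.isCompact
  haveI : CompactSpace K := isCompact_iff_compactSpace.mp hK.isCompact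
  let e : C × K → U := fun p => (p.1 : U) * (p.2 : U)
  have he : Continuous e :=
    (continuous_subtype_val.comp continuous_fst).mul
      (continuous_subtype_val.comp continuous_snd)
  have hbij : Function.Bijective e := by
    constructor
    · rintro ⟨⟨c, hc⟩, ⟨k, hk⟩⟩ ⟨⟨c', hc'⟩, ⟨k', hk'⟩⟩ hpq
      have hpq' : c * k = c' * k' := hpq
      obtain ⟨c0, _, huniq⟩ := htrans (c * k)
      have h1 : c = c0 := by
        refine huniq c ⟨hc, ?_⟩
        have : (c * k)⁻¹ * c = k⁻¹ := by group
        rw [this]; exact K.inv_mem hk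
      have h2 : c' = c0 := by
        refine huniq c' ⟨hc', ?_⟩
        have hc'eq : c' = c * k * k'⁻¹ := by rw [hpq']; group
        have : (c * k)⁻¹ * c' = k'⁻¹ := by rw [hc'eq]; group
        rw [this]; exact K.inv_mem hk'
      have hcc : c = c' := h1.trans h2.symm
      subst hcc
      have hkk : k = k' := by
        have := hpq'
        exact mul_left_cancel this
      subst hkk
      rfl
    · intro x
      obtain ⟨c0, ⟨hc0C, hc0K⟩, _⟩ := htrans x
      refine ⟨⟨⟨c0, hc0C⟩, ⟨(x⁻¹ * c0)⁻¹, K.inv_mem hc0K⟩⟩, ?_⟩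
      show c0 * (x⁻¹ * c0)⁻¹ = x
      group
  let homeo := he.homeoOfEquivCompactToT2 (f := Equiv.ofBijective e hbij)
  refine ⟨fun x => ((homeo.symm x).2 : U),
    continuous_subtype_val.comp (continuous_snd.comp homeo.symm.continuous),
    fun x => (homeo.symm x).2.2, ?_⟩
  intro x k hk
  have hx : ((homeo.symm x).1 : U) * ((homeo.symm x).2 : U) = x := homeo.apply_symm_apply x
  have hkey : homeo.symm (x * k) =
      ((homeo.symm x).1, ⟨((homeo.symm x).2 : U) * k, K.mul_mem (homeo.symm x).2.2 hk⟩) := by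
    apply homeo.injective
    rw [Homeomorph.apply_symm_apply]
    show x * k = ((homeo.symm x).1 : U) * (((homeo.symm x).2 : U) * k)
    rw [← mul_assoc, hx]
  show ((homeo.symm (x * k)).2 : U) = ((homeo.symm x).2 : U) * k
  rw [hkey]

end EquivProj
section Retraction

open Set Topology

variable {G : Type*} [Group G] [TopologicalSpace G] [IsTopologicalGroup G]
    [LocallyCompactSpace G] [TotallyDisconnectedSpace G] [T2Space G]

private theorem exists_equivariant_retraction (H : Subgroup G) (hH : IsClosed (H : Set G)) :
    ∃ r : G → G, Continuous r ∧ (∀ x, r x ∈ H) ∧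
      ∀ (x h : G), h ∈ H → r (x * h) = r x * h := by
  classical
  obtain ⟨U₀, hU₀c, hU₀o⟩ := exists_compact_open_subgroup' (G := G)
  haveI : CompactSpace ↥U₀ := isCompact_iff_compactSpace.mp hU₀c
  -- the double-coset equivalence relation
  let dc : Setoid G :=
    ⟨fun a b => ∃ u ∈ U₀, ∃ h ∈ H, b = u * a * h,
      ⟨fun a => ⟨1, U₀.one_mem, 1, H.one_mem, by group⟩,
       fun {a b} hab => by
         obtain ⟨u, hu, h, hh, hb⟩ := hab
         exact ⟨u⁻¹, U₀.inv_mem hu, h⁻¹, H.inv_mem hh, by rw [hb]; group⟩,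
       fun {a b c} hab hbc => by
         obtain ⟨u, hu, h, hh, hb⟩ := hab
         obtain ⟨u', hu', h', hh', hc⟩ := hbc
         exact ⟨u' * u, U₀.mul_mem hu' hu, h * h', H.mul_mem hh hh', by
           rw [hc, hb]; group⟩⟩⟩
  let g : Quotient dc → G := Quotient.out
  -- the subgroup `U₀ ∩ (g q) H (g q)⁻¹` viewed inside `↥U₀`
  let Ksub : Quotient dc → Subgroup ↥U₀ := fun q =>
    { carrier := {v : ↥U₀ | (g q)⁻¹ * (v : G) * (g q) ∈ H}
      one_mem' := by
        simpa using H.one_mem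
      mul_mem' := fun {a b} ha hb => by
        have hab : (g q)⁻¹ * ((a * b : ↥U₀) : G) * (g q) =
            ((g q)⁻¹ * (a : G) * (g q)) * ((g q)⁻¹ * (b : G) * (g q)) := by
          push_cast
          group
        show (g q)⁻¹ * ((a * b : ↥U₀) : G) * (g q) ∈ H
        rw [hab]
        exact H.mul_mem ha hb
      inv_mem' := fun {a} ha => by
        have hai : (g q)⁻¹ * ((a⁻¹ : ↥U₀) : G) * (g q) =
            ((g q)⁻¹ * (a : G) * (g q))⁻¹ := by
          push_cast
          group
        show (g q)⁻¹ * ((a⁻¹ : ↥U₀) : G) * (g q) ∈ H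
        rw [hai]
        exact H.inv_mem ha }
  have hKc : ∀ q, IsClosed ((Ksub q : Subgroup ↥U₀) : Set ↥U₀) := by
    intro q
    have : ((Ksub q : Subgroup ↥U₀) : Set ↥U₀) =
        (fun v : ↥U₀ => (g q)⁻¹ * (v : G) * (g q)) ⁻¹' (H : Set G) := rfl
    rw [this]
    exact hH.preimage (((continuous_const.mul continuous_subtype_val)).mul continuous_const)
  choose ρ hρcont hρmem hρequi using fun q => exists_equivariant_proj (Ksub q) (hKc q)
  -- validity of a decomposition
  let valid : Quotient dc → G → ↥U₀ → Prop := fun q x u => (g q)⁻¹ * ((u : G)⁻¹ * x) ∈ H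
  have hex : ∀ x : G, ∃ u : ↥U₀, valid (Quotient.mk dc x) x u := by
    intro x
    obtain ⟨u, huU, h, hh, hx⟩ := Quotient.mk_out (s := dc) x
    refine ⟨⟨u, huU⟩, ?_⟩
    set o := (Quotient.mk dc x).out with ho
    show o⁻¹ * (u⁻¹ * x) ∈ H
    have hxeq : o⁻¹ * (u⁻¹ * x) = h := by rw [hx]; group
    rw [hxeq]
    exact hh
  choose usel husel using hex
  -- the local formula for the retraction
  let Φ : Quotient dc → G → ↥U₀ → G := fun q x u => (g q)⁻¹ * ↑(ρ q u) * ((u : G))⁻¹ * x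
  -- well-definedness of the formula
  have hwd : ∀ (q : Quotient dc) (x : G) (u u' : ↥U₀),
      valid q x u → valid q x u' → Φ q x u = Φ q x u' := by
    intro q x u u' hu hu'
    have hk : u⁻¹ * u' ∈ Ksub q := by
      show (g q)⁻¹ * ((u⁻¹ * u' : ↥U₀) : G) * (g q) ∈ H
      have : (g q)⁻¹ * ((u⁻¹ * u' : ↥U₀) : G) * (g q) =
          ((g q)⁻¹ * ((u : G)⁻¹ * x)) * ((g q)⁻¹ * ((u' : G)⁻¹ * x))⁻¹ := by
        push_cast
        group
      rw [this]
      exact H.mul_mem hu (H.inv_mem hu')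
    have hmul := hρequi q u (u⁻¹ * u') hk
    have huu : u * (u⁻¹ * u') = u' := by group
    rw [huu] at hmul
    show (g q)⁻¹ * ↑(ρ q u) * ((u : G))⁻¹ * x = (g q)⁻¹ * ↑(ρ q u') * ((u' : G))⁻¹ * x
    rw [hmul]
    push_cast
    group
  let rr : G → G := fun x => Φ (Quotient.mk dc x) x (usel x)
  have hmemH : ∀ x, rr x ∈ H := by
    intro x
    have hρm := hρmem (Quotient.mk dc x) (usel x)
    have hval := husel x
    have hsplit : rr x = ((g (Quotient.mk dc x))⁻¹ * ↑(ρ (Quotient.mk dc x) (usel x)) *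
        (g (Quotient.mk dc x))) * ((g (Quotient.mk dc x))⁻¹ * (((usel x : G))⁻¹ * x)) := by
      show (g (Quotient.mk dc x))⁻¹ * ↑(ρ (Quotient.mk dc x) (usel x)) * ((usel x : G))⁻¹ * x = _
      group
    rw [hsplit]
    exact H.mul_mem hρm hval
  have hequi : ∀ (x h : G), h ∈ H → rr (x * h) = rr x * h := by
    intro x h hh
    have hq : Quotient.mk dc (x * h) = Quotient.mk dc x :=
      (Quot.sound ⟨1, U₀.one_mem, h, hh, by group⟩).symm
    have hv1 : valid (Quotient.mk dc x) (x * h) (usel (x * h)) := by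
      have := husel (x * h)
      rwa [hq] at this
    have hv2 : valid (Quotient.mk dc x) (x * h) (usel x) := by
      show (g (Quotient.mk dc x))⁻¹ * (((usel x : G))⁻¹ * (x * h)) ∈ H
      have heq : (g (Quotient.mk dc x))⁻¹ * (((usel x : G))⁻¹ * (x * h)) =
          ((g (Quotient.mk dc x))⁻¹ * (((usel x : G))⁻¹ * x)) * h := by group
      rw [heq]
      exact H.mul_mem (husel x) hh
    have e1 : rr (x * h) = Φ (Quotient.mk dc x) (x * h) (usel (x * h)) := by
      show Φ (Quotient.mk dc (x * h)) (x * h) (usel (x * h)) = _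
      rw [hq]
    rw [e1, hwd _ _ _ (usel x) hv1 hv2]
    show (g (Quotient.mk dc x))⁻¹ * ↑(ρ (Quotient.mk dc x) (usel x)) *
        ((usel x : G))⁻¹ * (x * h) =
      ((g (Quotient.mk dc x))⁻¹ * ↑(ρ (Quotient.mk dc x) (usel x)) * ((usel x : G))⁻¹ * x) * h
    group
  have hcont : Continuous rr := by
    rw [continuous_iff_continuousAt]
    intro x₀
    have hΩo : IsOpen ((fun y : G => y * x₀⁻¹) ⁻¹' (U₀ : Set G)) :=
      hU₀o.preimage (continuous_mul_right x₀⁻¹)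
    have hx₀Ω : x₀ ∈ ((fun y : G => y * x₀⁻¹) ⁻¹' (U₀ : Set G)) := by
      show x₀ * x₀⁻¹ ∈ U₀
      simpa using U₀.one_mem
    set Ω : Set G := (fun y : G => y * x₀⁻¹) ⁻¹' (U₀ : Set G) with hΩ
    set q := Quotient.mk dc x₀ with hqdef
    -- on Ω, `rr` is given by an explicitly continuous formula
    have hloc : ∀ y : G, ∀ hy : y ∈ Ω,
        rr y = (g q)⁻¹ * ↑(ρ q ((⟨y * x₀⁻¹, hy⟩ : ↥U₀) * usel x₀)) *
          ((y * x₀⁻¹) * (usel x₀ : G))⁻¹ * y := by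
      intro y hy
      have hqy : Quotient.mk dc y = q := by
        rw [hqdef]
        exact (Quot.sound ⟨y * x₀⁻¹, hy, 1, H.one_mem, by group⟩).symm
      have hvy : valid q y ((⟨y * x₀⁻¹, hy⟩ : ↥U₀) * usel x₀) := by
        show (g q)⁻¹ * (((((⟨y * x₀⁻¹, hy⟩ : ↥U₀) * usel x₀ : ↥U₀) : G))⁻¹ * y) ∈ H
        have hcoe : (((⟨y * x₀⁻¹, hy⟩ : ↥U₀) * usel x₀ : ↥U₀) : G) =
            (y * x₀⁻¹) * (usel x₀ : G) := rfl
        have heq2 : (g q)⁻¹ * ((((y * x₀⁻¹) * (usel x₀ : G)))⁻¹ * y) =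
            (g q)⁻¹ * ((usel x₀ : G)⁻¹ * x₀) := by group
        rw [hcoe, heq2]
        exact husel x₀
      have hvy' : valid q y (usel y) := by
        have := husel y
        rwa [hqy] at this
      have e1 : rr y = Φ q y (usel y) := by
        show Φ (Quotient.mk dc y) y (usel y) = _
        rw [hqy]
      rw [e1, hwd q y (usel y) _ hvy' hvy]
      rfl
    have hcΩ : ContinuousOn rr Ω := by
      rw [continuousOn_iff_continuous_restrict]
      have hrestrict : Ω.domRestrict rr = fun y : Ω =>
          (g q)⁻¹ * ↑(ρ q ((⟨(y : G) * x₀⁻¹, y.2⟩ : ↥U₀) * usel x₀)) *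
            (((y : G) * x₀⁻¹) * (usel x₀ : G))⁻¹ * (y : G) := by
        funext y
        exact hloc y y.2
      rw [hrestrict]
      refine ((continuous_const.mul ?_).mul ?_).mul continuous_subtype_val
      · have c0 : Continuous (fun y : Ω => (⟨(y : G) * x₀⁻¹, y.2⟩ : ↥U₀)) :=
          (continuous_subtype_val.mul continuous_const).subtype_mk _
        have c1 : Continuous (fun y : Ω => (⟨(y : G) * x₀⁻¹, y.2⟩ : ↥U₀) * usel x₀) :=
          c0.mul continuous_const
        exact continuous_subtype_val.comp ((hρcont q).comp c1)
      · exact ((continuous_subtype_val.mul continuous_const).mul continuous_const).inv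
    exact hcΩ.continuousAt (hΩo.mem_nhds hx₀Ω)
  exact ⟨rr, hcont, hmemH, hequi⟩

end Retraction

/-- If `H` is a closed subgroup of a t.d.l.c. group `G` and `G` admits a
left-invariant normed `ℚ_p`-mean of operator norm `≤ M`, then so does `H`. -/
theorem invariantMean_of_closedSubgroup (p : ℕ) [Fact p.Prime]
    (G : Type*) [Group G] [TopologicalSpace G] [IsTopologicalGroup G]
    [LocallyCompactSpace G] [TotallyDisconnectedSpace G] [T2Space G]
    (H : Subgroup G) (hH : IsClosed (H : Set G))
    (M : ℝ) (hM : 0 ≤ M)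
    (h : ∃ m : (G →ᵇ ℚ_[p]) →ₗ[ℚ_[p]] ℚ_[p], IsInvariantMean ℚ_[p] G m ∧
      MeanNormLE ℚ_[p] G m M) :
    ∃ m' : (↥H →ᵇ ℚ_[p]) →ₗ[ℚ_[p]] ℚ_[p], IsInvariantMean ℚ_[p] ↥H m' ∧
      MeanNormLE ℚ_[p] ↥H m' M := by
  classical
  obtain ⟨m, ⟨_, hconst, hinva⟩, hnorm⟩ := h
  obtain ⟨rr, hrrcont, hrrmem, hrrequi⟩ := exists_equivariant_retraction H hH
  -- turn the right-equivariant retraction into a left-equivariant one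
  let r : G → ↥H := fun x => ⟨(rr x⁻¹)⁻¹, H.inv_mem (hrrmem x⁻¹)⟩
  have hrcont : Continuous r := ((hrrcont.comp continuous_inv).inv).subtype_mk _
  have hrequi : ∀ (h : ↥H) (x : G), r ((h : G) * x) = h * r x := by
    intro h x
    have h1 : ((h : G) * x)⁻¹ = x⁻¹ * (h : G)⁻¹ := by group
    apply Subtype.ext
    show (rr ((h : G) * x)⁻¹)⁻¹ = (h : G) * (rr x⁻¹)⁻¹
    rw [h1, hrrequi x⁻¹ (h : G)⁻¹ (H.inv_mem h.2)]
    group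
  let rC : C(G, ↥H) := ⟨r, hrcont⟩
  let ι : (↥H →ᵇ ℚ_[p]) →ₗ[ℚ_[p]] (G →ᵇ ℚ_[p]) :=
    { toFun := fun f => f.compContinuous rC
      map_add' := fun f g => by
        ext x
        simp [BoundedContinuousFunction.compContinuous_apply]
      map_smul' := fun c f => by
        ext x
        simp [BoundedContinuousFunction.compContinuous_apply] }
  have hιnorm : ∀ f : ↥H →ᵇ ℚ_[p], ‖ι f‖ ≤ ‖f‖ := fun f =>
    BoundedContinuousFunction.norm_compContinuous_le f rC
  have hbound : ∀ f : ↥H →ᵇ ℚ_[p], ‖(m.comp ι) f‖ ≤ M * ‖f‖ := by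
    intro f
    calc ‖(m.comp ι) f‖ = ‖m (ι f)‖ := rfl
      _ ≤ M * ‖ι f‖ := hnorm (ι f)
      _ ≤ M * ‖f‖ := mul_le_mul_of_nonneg_left (hιnorm f) hM
  refine ⟨m.comp ι, ⟨⟨M, hbound⟩, ?_, ?_⟩, hbound⟩
  · have hconst' : ι (BoundedContinuousFunction.const ↥H (1 : ℚ_[p])) =
        BoundedContinuousFunction.const G (1 : ℚ_[p]) := by
      ext x
      simp [ι, BoundedContinuousFunction.compContinuous_apply]
    show m (ι (BoundedContinuousFunction.const ↥H (1 : ℚ_[p]))) = 1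
    rw [hconst']
    exact hconst
  · intro h f
    have hkey : ι (leftTranslate ℚ_[p] h f) = leftTranslate ℚ_[p] (h : G) (ι f) := by
      ext x
      show f (h⁻¹ * r x) = f (r ((h : G)⁻¹ * x))
      congr 1
      have : ((h : G))⁻¹ = ((h⁻¹ : ↥H) : G) := rfl
      rw [this, hrequi h⁻¹ x]
    show m (ι (leftTranslate ℚ_[p] h f)) = m (ι f)
    rw [hkey]
    exact hinva (h : G) (ι f)
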